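/- Let ABCD be a rectangle and PQRS a parallelogram inscribed in ABCD with P on side AB, Q on side BC, R on side CD, S on side DA, and ∠QPB = θ ∈ (0, π/2). Then the infimum of radii r such that the open r-neighborhood of the boundary of PQRS contains ABCD equals max(|AP|·sin θ, |BP|·sin θ). -/

import Mathlib

open Set

set_option maxHeartbeats 1000000

/-- A point of the Euclidean plane. -/
noncomputable def pt (x y : ℝ) : EuclideanSpace ℝ (Fin 2) := WithLp.toLp 2 ![x, y]

lemma dist_pt (a b a' b' : ℝ) :
    dist (pt a b) (pt a' b') = Real.sqrt ((a - a') ^ 2 + (b - b') ^ 2) := by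
  rw [EuclideanSpace.dist_eq, Fin.sum_univ_two]
  simp [pt, Real.dist_eq, sq_abs]

lemma pt_eta (z : EuclideanSpace ℝ (Fin 2)) : z = pt (z 0) (z 1) := by
  ext i; fin_cases i <;> rfl

lemma mem_seg (x1 y1 x2 y2 a b μ : ℝ) (h0 : 0 ≤ μ) (h1 : μ ≤ 1)
    (ha : a = (1 - μ) * x1 + μ * x2) (hb : b = (1 - μ) * y1 + μ * y2) :
    pt a b ∈ segment ℝ (pt x1 y1) (pt x2 y2) := by
  rw [segment_eq_image]
  refine ⟨μ, ⟨h0, h1⟩, ?_⟩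
  ext i
  fin_cases i <;>
    simp [pt, PiLp.add_apply, PiLp.smul_apply, smul_eq_mul, ha, hb]

lemma seg_coords {p : EuclideanSpace ℝ (Fin 2)} {x1 y1 x2 y2 : ℝ}
    (h : p ∈ segment ℝ (pt x1 y1) (pt x2 y2)) :
    ∃ μ : ℝ, 0 ≤ μ ∧ μ ≤ 1 ∧ p 0 = (1 - μ) * x1 + μ * x2 ∧ p 1 = (1 - μ) * y1 + μ * y2 := by
  rw [segment_eq_image] at h
  obtain ⟨μ, ⟨h0, h1⟩, rfl⟩ := h
  exact ⟨μ, h0, h1, by simp [pt, PiLp.add_apply, PiLp.smul_apply, smul_eq_mul],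
    by simp [pt, PiLp.add_apply, PiLp.smul_apply, smul_eq_mul]⟩

lemma dist_helper (x y a b δ M : ℝ) (hM : 0 ≤ M) (hδ : 0 ≤ δ) (hδM : δ ≤ M)
    (heq : (x - a) ^ 2 + (y - b) ^ 2 = δ ^ 2) :
    dist (pt x y) (pt a b) ≤ M := by
  rw [dist_pt]
  calc Real.sqrt ((x - a) ^ 2 + (y - b) ^ 2) ≤ Real.sqrt (M ^ 2) := by
        apply Real.sqrt_le_sqrt; nlinarith
    _ = M := Real.sqrt_sq hM

lemma dist_pt_ge (cx cy a b s c m : ℝ) (h1 : s ^ 2 + c ^ 2 = 1) (hm : 0 ≤ m)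
    (hk : m ^ 2 ≤ ((a - cx) * s + (b - cy) * c) ^ 2) :
    m ≤ dist (pt cx cy) (pt a b) := by
  rw [dist_pt]
  rw [Real.le_sqrt hm (by positivity)]
  nlinarith [sq_nonneg ((a - cx) * c - (b - cy) * s)]

lemma memSP (w x₀ s c a b : ℝ) (hx0 : 0 < x₀) (hs : 0 < s) (hc : 0 < c)
    (ha : 0 ≤ a) (hb : 0 ≤ b) (hline : a * s + b * c = x₀ * s) :
    pt a b ∈ segment ℝ (pt 0 (x₀ * (s / c))) (pt x₀ 0) := by
  refine mem_seg _ _ _ _ _ _ (a / x₀) (by positivity) ?_ ?_ ?_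
  · rw [div_le_one hx0]; nlinarith
  · field_simp; ring
  · field_simp
    linear_combination x₀ * hline

lemma memPQ (w x₀ s c a b : ℝ) (hx0 : 0 < x₀) (hxw : x₀ < w) (hs : 0 < s) (hc : 0 < c)
    (hb : 0 ≤ b) (haw : a ≤ w) (hline : a * s - b * c = x₀ * s) :
    pt a b ∈ segment ℝ (pt x₀ 0) (pt w ((w - x₀) * (s / c))) := by
  have hax : x₀ ≤ a := by nlinarith
  have hwx : (0:ℝ) < w - x₀ := by linarith
  refine mem_seg _ _ _ _ _ _ ((a - x₀) / (w - x₀))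
    (div_nonneg (by linarith) (by linarith))
    (by rw [div_le_one hwx]; linarith) ?_ ?_
  · field_simp [hwx.ne']; ring
  · field_simp [hwx.ne', hc.ne']
    linear_combination (x₀ - w) * hline

lemma memQR (w x₀ s c a b : ℝ) (hx0 : 0 < x₀) (hxw : x₀ < w) (hs : 0 < s) (hc : 0 < c)
    (haw : a ≤ w) (hbh : b * c ≤ w * s) (hline : a * s + b * c = (2 * w - x₀) * s) :
    pt a b ∈ segment ℝ (pt w ((w - x₀) * (s / c))) (pt (w - x₀) (w * (s / c))) := by
  have hal : w - x₀ ≤ a := by nlinarith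
  refine mem_seg _ _ _ _ _ _ ((w - a) / x₀)
    (div_nonneg (by linarith) (by linarith))
    (by rw [div_le_one hx0]; linarith) ?_ ?_
  · field_simp [hx0.ne']; ring
  · field_simp [hx0.ne', hc.ne']
    linear_combination x₀ * hline

lemma memRS (w x₀ s c a b : ℝ) (hx0 : 0 < x₀) (hxw : x₀ < w) (hs : 0 < s) (hc : 0 < c)
    (ha : 0 ≤ a) (hbh : b * c ≤ w * s) (hline : a * s - b * c = -(x₀ * s)) :
    pt a b ∈ segment ℝ (pt (w - x₀) (w * (s / c))) (pt 0 (x₀ * (s / c))) := by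
  have hau : a ≤ w - x₀ := by nlinarith
  have hwx : (0:ℝ) < w - x₀ := by linarith
  refine mem_seg _ _ _ _ _ _ ((w - x₀ - a) / (w - x₀))
    (div_nonneg (by linarith) (by linarith))
    ((div_le_one hwx).mpr (by linarith)) ?_ ?_
  · field_simp [hwx.ne']; ring
  · field_simp [hwx.ne', hc.ne']
    linear_combination (x₀ - w) * hline

lemma cover (w x₀ s c x y : ℝ) (hw : 0 < w) (hx0 : 0 < x₀) (hxw : x₀ < w)
    (hs : 0 < s) (hc : 0 < c) (h1 : s ^ 2 + c ^ 2 = 1)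
    (hx : 0 ≤ x) (hx' : x ≤ w) (hy : 0 ≤ y) (hy' : y * c ≤ w * s) :
    ∃ p ∈ segment ℝ (pt x₀ 0) (pt w ((w - x₀) * (s / c))) ∪
        segment ℝ (pt w ((w - x₀) * (s / c))) (pt (w - x₀) (w * (s / c))) ∪
        segment ℝ (pt (w - x₀) (w * (s / c))) (pt 0 (x₀ * (s / c))) ∪
        segment ℝ (pt 0 (x₀ * (s / c))) (pt x₀ 0),
      dist (pt x y) p ≤ max (x₀ * s) ((w - x₀) * s) := by
  have hM1 : x₀ * s ≤ max (x₀ * s) ((w - x₀) * s) := le_max_left _ _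
  have hM2 : (w - x₀) * s ≤ max (x₀ * s) ((w - x₀) * s) := le_max_right _ _
  have hM0 : (0:ℝ) ≤ max (x₀ * s) ((w - x₀) * s) := le_trans (by positivity) hM1
  have hxs : x * s ≤ w * s := by nlinarith
  have hxs0 : (0:ℝ) ≤ x * s := by positivity
  have hyc0 : (0:ℝ) ≤ y * c := by positivity
  rcases lt_or_ge (x * s + y * c) (x₀ * s) with hu1 | hu1
  · -- left of line SP
    have hδ0 : (0:ℝ) ≤ x₀ * s - (x * s + y * c) := by linarith
    refine ⟨pt (x + (x₀ * s - (x * s + y * c)) * s) (y + (x₀ * s - (x * s + y * c)) * c),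
      ?_, ?_⟩
    · simp only [Set.mem_union]
      right
      exact memSP w x₀ s c _ _ hx0 hs hc (by nlinarith) (by nlinarith)
        (by linear_combination (x₀ * s - (x * s + y * c)) * h1)
    · exact dist_helper _ _ _ _ (x₀ * s - (x * s + y * c)) _ hM0 hδ0
        (by linarith) (by linear_combination (x₀ * s - (x * s + y * c)) ^ 2 * h1)
  rcases lt_or_ge ((2 * w - x₀) * s) (x * s + y * c) with hu2 | hu2
  · -- right of line QR
    have hδ0 : (0:ℝ) ≤ (x * s + y * c) - (2 * w - x₀) * s := by linarith
    refine ⟨pt (x - ((x * s + y * c) - (2 * w - x₀) * s) * s)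
      (y - ((x * s + y * c) - (2 * w - x₀) * s) * c), ?_, ?_⟩
    · simp only [Set.mem_union]
      left; left; right
      exact memQR w x₀ s c _ _ hx0 hxw hs hc (by nlinarith) (by nlinarith)
        (by linear_combination ((2 * w - x₀) * s - (x * s + y * c)) * h1)
    · exact dist_helper _ _ _ _ ((x * s + y * c) - (2 * w - x₀) * s) _ hM0 hδ0
        (by linarith)
        (by linear_combination ((x * s + y * c) - (2 * w - x₀) * s) ^ 2 * h1)
  rcases lt_or_ge (x₀ * s) (x * s - y * c) with hv1 | hv1
  · -- below line PQ
    have hδ0 : (0:ℝ) ≤ (x * s - y * c) - x₀ * s := by linarith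
    refine ⟨pt (x - ((x * s - y * c) - x₀ * s) * s) (y + ((x * s - y * c) - x₀ * s) * c),
      ?_, ?_⟩
    · simp only [Set.mem_union]
      left; left; left
      exact memPQ w x₀ s c _ _ hx0 hxw hs hc (by nlinarith) (by nlinarith)
        (by linear_combination (x₀ * s - (x * s - y * c)) * h1)
    · exact dist_helper _ _ _ _ ((x * s - y * c) - x₀ * s) _ hM0 hδ0
        (by linarith) (by linear_combination ((x * s - y * c) - x₀ * s) ^ 2 * h1)
  rcases lt_or_ge (x * s - y * c) (-(x₀ * s)) with hv2 | hv2
  · -- above line RS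
    have hδ0 : (0:ℝ) ≤ -(x₀ * s) - (x * s - y * c) := by linarith
    refine ⟨pt (x + (-(x₀ * s) - (x * s - y * c)) * s)
      (y - (-(x₀ * s) - (x * s - y * c)) * c), ?_, ?_⟩
    · simp only [Set.mem_union]
      left; right
      exact memRS w x₀ s c _ _ hx0 hxw hs hc (by nlinarith) (by nlinarith)
        (by linear_combination (-(x₀ * s) - (x * s - y * c)) * h1)
    · exact dist_helper _ _ _ _ (-(x₀ * s) - (x * s - y * c)) _ hM0 hδ0
        (by linarith) (by linear_combination (-(x₀ * s) - (x * s - y * c)) ^ 2 * h1)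
  -- now inside the parallelogram slab box
  rcases le_or_gt (min ((x * s + y * c) - x₀ * s) ((2 * w - x₀) * s - (x * s + y * c)))
      (min (x₀ * s - (x * s - y * c)) ((x * s - y * c) + x₀ * s)) with hm | hm
  · have hA := hm.trans (min_le_left (x₀ * s - (x * s - y * c)) ((x * s - y * c) + x₀ * s))
    have hB := hm.trans (min_le_right (x₀ * s - (x * s - y * c)) ((x * s - y * c) + x₀ * s))
    rcases le_total ((x * s + y * c) - x₀ * s) ((2 * w - x₀) * s - (x * s + y * c)) with hg | hg
    · -- project onto SP, δ = u - x₀ s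
      rw [min_eq_left hg] at hA hB
      have hδ0 : (0:ℝ) ≤ (x * s + y * c) - x₀ * s := by linarith
      have hyx : y * c ≤ x₀ * s := by linarith
      have hxx : x ≤ x₀ := by nlinarith
      refine ⟨pt (x - ((x * s + y * c) - x₀ * s) * s) (y - ((x * s + y * c) - x₀ * s) * c),
        ?_, ?_⟩
      · simp only [Set.mem_union]
        right
        refine memSP w x₀ s c _ _ hx0 hs hc ?_ ?_
          (by linear_combination (x₀ * s - (x * s + y * c)) * h1)
        · have hid : x - ((x * s + y * c) - x₀ * s) * s = x * c ^ 2 + s * (x₀ * s - y * c) := by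
            linear_combination (-x) * h1
          have : (0:ℝ) ≤ x * c ^ 2 + s * (x₀ * s - y * c) :=
            add_nonneg (by positivity) (mul_nonneg hs.le (by linarith))
          linarith
        · have hid : y - ((x * s + y * c) - x₀ * s) * c = y * s ^ 2 + s * c * (x₀ - x) := by
            linear_combination (-y) * h1
          have : (0:ℝ) ≤ y * s ^ 2 + s * c * (x₀ - x) :=
            add_nonneg (by positivity) (mul_nonneg (by positivity) (by linarith))
          linarith
      · exact dist_helper _ _ _ _ ((x * s + y * c) - x₀ * s) _ hM0 hδ0
          (by linarith) (by linear_combination ((x * s + y * c) - x₀ * s) ^ 2 * h1)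
    · -- project onto QR, δ = (2w - x₀)s - u
      rw [min_eq_right hg] at hA hB
      have hδ0 : (0:ℝ) ≤ (2 * w - x₀) * s - (x * s + y * c) := by linarith
      have hycw : (w - x₀) * s ≤ y * c := by linarith
      have hxw2 : w - x₀ ≤ x := by nlinarith
      refine ⟨pt (x + ((2 * w - x₀) * s - (x * s + y * c)) * s)
        (y + ((2 * w - x₀) * s - (x * s + y * c)) * c), ?_, ?_⟩
      · simp only [Set.mem_union]
        left; left; right
        refine memQR w x₀ s c _ _ hx0 hxw hs hc ?_ ?_
          (by linear_combination ((2 * w - x₀) * s - (x * s + y * c)) * h1)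
        · have hid : w - (x + ((2 * w - x₀) * s - (x * s + y * c)) * s)
              = (w - x) * c ^ 2 + s * (y * c - (w - x₀) * s) := by
            linear_combination (-(w - x)) * h1
          have : (0:ℝ) ≤ (w - x) * c ^ 2 + s * (y * c - (w - x₀) * s) :=
            add_nonneg (mul_nonneg (by linarith) (by positivity))
              (mul_nonneg hs.le (by linarith))
          linarith
        · have hid : w * s - (y + ((2 * w - x₀) * s - (x * s + y * c)) * c) * c
              = (w * s - y * c) * s ^ 2 + s * c ^ 2 * (x - (w - x₀)) := by
            linear_combination (-(w * s - y * c)) * h1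
          have : (0:ℝ) ≤ (w * s - y * c) * s ^ 2 + s * c ^ 2 * (x - (w - x₀)) :=
            add_nonneg (mul_nonneg (by linarith) (by positivity))
              (mul_nonneg (by positivity) (by linarith))
          linarith
      · exact dist_helper _ _ _ _ ((2 * w - x₀) * s - (x * s + y * c)) _ hM0 hδ0
          (by linarith)
          (by linear_combination ((2 * w - x₀) * s - (x * s + y * c)) ^ 2 * h1)
  · have hA := (min_le_left ((x * s + y * c) - x₀ * s)
      ((2 * w - x₀) * s - (x * s + y * c))).trans' hm.le
    have hB := (min_le_right ((x * s + y * c) - x₀ * s)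
      ((2 * w - x₀) * s - (x * s + y * c))).trans' hm.le
    rcases le_total (x₀ * s - (x * s - y * c)) ((x * s - y * c) + x₀ * s) with hg | hg
    · -- project onto PQ, δ = x₀ s - v
      rw [min_eq_left hg] at hA hB
      have hδ0 : (0:ℝ) ≤ x₀ * s - (x * s - y * c) := by linarith
      have hxx : x₀ ≤ x := by nlinarith
      have hycw : y * c ≤ (w - x₀) * s := by linarith
      refine ⟨pt (x + (x₀ * s - (x * s - y * c)) * s) (y - (x₀ * s - (x * s - y * c)) * c),
        ?_, ?_⟩
      · simp only [Set.mem_union]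
        left; left; left
        refine memPQ w x₀ s c _ _ hx0 hxw hs hc ?_ ?_
          (by linear_combination (x₀ * s - (x * s - y * c)) * h1)
        · have hid : y - (x₀ * s - (x * s - y * c)) * c = y * s ^ 2 + s * c * (x - x₀) := by
            linear_combination (-y) * h1
          have : (0:ℝ) ≤ y * s ^ 2 + s * c * (x - x₀) :=
            add_nonneg (by positivity) (mul_nonneg (by positivity) (by linarith))
          linarith
        · have hid : w - (x + (x₀ * s - (x * s - y * c)) * s)
              = (w - x) * c ^ 2 + s * ((w - x₀) * s - y * c) := by
            linear_combination (-(w - x)) * h1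
          have : (0:ℝ) ≤ (w - x) * c ^ 2 + s * ((w - x₀) * s - y * c) :=
            add_nonneg (mul_nonneg (by linarith) (by positivity))
              (mul_nonneg hs.le (by linarith))
          linarith
      · exact dist_helper _ _ _ _ (x₀ * s - (x * s - y * c)) _ hM0 hδ0
          (by linarith) (by linear_combination (x₀ * s - (x * s - y * c)) ^ 2 * h1)
    · -- project onto RS, δ = v + x₀ s
      rw [min_eq_right hg] at hA hB
      have hδ0 : (0:ℝ) ≤ (x * s - y * c) + x₀ * s := by linarith
      have hycx : x₀ * s ≤ y * c := by linarith
      have hxw2 : x ≤ w - x₀ := by nlinarith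
      refine ⟨pt (x - ((x * s - y * c) + x₀ * s) * s) (y + ((x * s - y * c) + x₀ * s) * c),
        ?_, ?_⟩
      · simp only [Set.mem_union]
        left; right
        refine memRS w x₀ s c _ _ hx0 hxw hs hc ?_ ?_
          (by linear_combination (-((x * s - y * c) + x₀ * s)) * h1)
        · have hid : x - ((x * s - y * c) + x₀ * s) * s = x * c ^ 2 + s * (y * c - x₀ * s) := by
            linear_combination (-x) * h1
          have : (0:ℝ) ≤ x * c ^ 2 + s * (y * c - x₀ * s) :=
            add_nonneg (by positivity) (mul_nonneg hs.le (by linarith))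
          linarith
        · have hid : w * s - (y + ((x * s - y * c) + x₀ * s) * c) * c
              = (w * s - y * c) * s ^ 2 + s * c ^ 2 * (w - x - x₀) := by
            linear_combination (-(w * s - y * c)) * h1
          have : (0:ℝ) ≤ (w * s - y * c) * s ^ 2 + s * c ^ 2 * (w - x - x₀) :=
            add_nonneg (mul_nonneg (by linarith) (by positivity))
              (mul_nonneg (by positivity) (by linarith))
          linarith
      · exact dist_helper _ _ _ _ ((x * s - y * c) + x₀ * s) _ hM0 hδ0
          (by linarith) (by linear_combination ((x * s - y * c) + x₀ * s) ^ 2 * h1)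

lemma farA (w x₀ s c : ℝ) (hw : 0 < w) (hx0 : 0 < x₀) (hxw : x₀ < w)
    (hs : 0 < s) (hc : 0 < c) (h1 : s ^ 2 + c ^ 2 = 1) :
    ∀ p ∈ segment ℝ (pt x₀ 0) (pt w ((w - x₀) * (s / c))) ∪
        segment ℝ (pt w ((w - x₀) * (s / c))) (pt (w - x₀) (w * (s / c))) ∪
        segment ℝ (pt (w - x₀) (w * (s / c))) (pt 0 (x₀ * (s / c))) ∪
        segment ℝ (pt 0 (x₀ * (s / c))) (pt x₀ 0),
      x₀ * s ≤ dist (pt 0 0) p := by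
  intro p hp
  have hm : (0:ℝ) ≤ x₀ * s := by positivity
  have h1' : s ^ 2 + (-c) ^ 2 = 1 := by linear_combination h1
  rw [pt_eta p]
  simp only [Set.mem_union] at hp
  rcases hp with ((h | h) | h) | h <;> obtain ⟨μ, hμ0, hμ1, e0, e1⟩ := seg_coords h
  · -- PQ
    refine dist_pt_ge _ _ _ _ s (-c) _ h1' hm ?_
    have hv : (p 0 - 0) * s + (p 1 - 0) * (-c) = x₀ * s := by
      rw [e0, e1]; field_simp; ring
    rw [hv]
  · -- QR
    refine dist_pt_ge _ _ _ _ s c _ h1 hm ?_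
    have hv : (p 0 - 0) * s + (p 1 - 0) * c = (2 * w - x₀) * s := by
      rw [e0, e1]; field_simp; ring
    rw [hv]
    have h2 : x₀ * s ≤ (2 * w - x₀) * s := by nlinarith
    exact pow_le_pow_left₀ (by positivity) h2 2
  · -- RS
    refine dist_pt_ge _ _ _ _ s (-c) _ h1' hm ?_
    have hv : (p 0 - 0) * s + (p 1 - 0) * (-c) = -(x₀ * s) := by
      rw [e0, e1]; field_simp; ring
    rw [hv]
    exact le_of_eq (by ring)
  · -- SP
    refine dist_pt_ge _ _ _ _ s c _ h1 hm ?_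
    have hv : (p 0 - 0) * s + (p 1 - 0) * c = x₀ * s := by
      rw [e0, e1]; field_simp; ring
    rw [hv]

lemma farB (w x₀ s c : ℝ) (hw : 0 < w) (hx0 : 0 < x₀) (hxw : x₀ < w)
    (hs : 0 < s) (hc : 0 < c) (h1 : s ^ 2 + c ^ 2 = 1) :
    ∀ p ∈ segment ℝ (pt x₀ 0) (pt w ((w - x₀) * (s / c))) ∪
        segment ℝ (pt w ((w - x₀) * (s / c))) (pt (w - x₀) (w * (s / c))) ∪
        segment ℝ (pt (w - x₀) (w * (s / c))) (pt 0 (x₀ * (s / c))) ∪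
        segment ℝ (pt 0 (x₀ * (s / c))) (pt x₀ 0),
      (w - x₀) * s ≤ dist (pt w 0) p := by
  intro p hp
  have hm : (0:ℝ) ≤ (w - x₀) * s := by
    apply mul_nonneg _ hs.le; linarith
  have h1' : s ^ 2 + (-c) ^ 2 = 1 := by linear_combination h1
  rw [pt_eta p]
  simp only [Set.mem_union] at hp
  rcases hp with ((h | h) | h) | h <;> obtain ⟨μ, hμ0, hμ1, e0, e1⟩ := seg_coords h
  · -- PQ
    refine dist_pt_ge _ _ _ _ s (-c) _ h1' hm ?_
    have hv : (p 0 - w) * s + (p 1 - 0) * (-c) = x₀ * s - w * s := by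
      rw [e0, e1]; field_simp; ring
    rw [hv]
    exact le_of_eq (by ring)
  · -- QR
    refine dist_pt_ge _ _ _ _ s c _ h1 hm ?_
    have hv : (p 0 - w) * s + (p 1 - 0) * c = (w - x₀) * s := by
      rw [e0, e1]; field_simp; ring
    rw [hv]
  · -- RS
    refine dist_pt_ge _ _ _ _ s (-c) _ h1' hm ?_
    have hv : (p 0 - w) * s + (p 1 - 0) * (-c) = -((w + x₀) * s) := by
      rw [e0, e1]; field_simp; ring
    rw [hv]
    have h2 : (w - x₀) * s ≤ (w + x₀) * s := by nlinarith
    calc ((w - x₀) * s) ^ 2 ≤ ((w + x₀) * s) ^ 2 := pow_le_pow_left₀ hm h2 2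
      _ = (-((w + x₀) * s)) ^ 2 := by ring
  · -- SP
    refine dist_pt_ge _ _ _ _ s c _ h1 hm ?_
    have hv : (p 0 - w) * s + (p 1 - 0) * c = x₀ * s - w * s := by
      rw [e0, e1]; field_simp; ring
    rw [hv]
    exact le_of_eq (by ring)

/-- Rectangle ABCD with A=(0,0), B=(w,0), C=(w,h), D=(0,h); the inscribed parallelogram PQRS
has P = (x₀, 0) on AB, sides of slope ±tan θ, which forces tan θ = h/w, and then
Q = (w, (w-x₀) tan θ) on BC, R = (w-x₀, h) on CD, S = (0, x₀ tan θ) on DA. -/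
theorem stmt6 (w h θ x₀ : ℝ) (hw : 0 < w) (hh : 0 < h)
    (hθ : θ ∈ Ioo (0:ℝ) (Real.pi / 2)) (htan : Real.tan θ = h / w)
    (hx₀ : x₀ ∈ Ioo (0:ℝ) w)
    (P Q R S : EuclideanSpace ℝ (Fin 2))
    (hP : P = pt x₀ 0) (hQ : Q = pt w ((w - x₀) * Real.tan θ))
    (hR : R = pt (w - x₀) h) (hS : S = pt 0 (x₀ * Real.tan θ)) :
    sInf {r : ℝ | 0 < r ∧
        {z : EuclideanSpace ℝ (Fin 2) | z 0 ∈ Icc (0:ℝ) w ∧ z 1 ∈ Icc (0:ℝ) h} ⊆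
          Metric.thickening r
            (segment ℝ P Q ∪ segment ℝ Q R ∪ segment ℝ R S ∪ segment ℝ S P)} =
      max (x₀ * Real.sin θ) ((w - x₀) * Real.sin θ) := by
  obtain ⟨hθ0, hθ2⟩ := hθ
  obtain ⟨hx00, hx0w⟩ := hx₀
  have hs : 0 < Real.sin θ := Real.sin_pos_of_pos_of_lt_pi hθ0 (by linarith [Real.pi_pos])
  have hc : 0 < Real.cos θ := Real.cos_pos_of_mem_Ioo ⟨by linarith [Real.pi_pos], hθ2⟩
  have h1 : Real.sin θ ^ 2 + Real.cos θ ^ 2 = 1 := Real.sin_sq_add_cos_sq θ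
  have ht : Real.tan θ = Real.sin θ / Real.cos θ := Real.tan_eq_sin_div_cos θ
  have hhw : h = w * (Real.sin θ / Real.cos θ) := by
    rw [ht] at htan
    field_simp at htan ⊢
    linarith
  subst hP hQ hR hS hhw
  rw [ht]
  set s := Real.sin θ
  set c := Real.cos θ
  have key : {r : ℝ | 0 < r ∧
      {z : EuclideanSpace ℝ (Fin 2) | z 0 ∈ Icc (0:ℝ) w ∧ z 1 ∈ Icc (0:ℝ) (w * (s / c))} ⊆
        Metric.thickening r
          (segment ℝ (pt x₀ 0) (pt w ((w - x₀) * (s / c))) ∪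
            segment ℝ (pt w ((w - x₀) * (s / c))) (pt (w - x₀) (w * (s / c))) ∪
            segment ℝ (pt (w - x₀) (w * (s / c))) (pt 0 (x₀ * (s / c))) ∪
            segment ℝ (pt 0 (x₀ * (s / c))) (pt x₀ 0))} =
      Ioi (max (x₀ * s) ((w - x₀) * s)) := by
    ext r
    simp only [mem_setOf_eq, mem_Ioi]
    constructor
    · rintro ⟨hr, hsub⟩
      have hAmem : pt 0 0 ∈ {z : EuclideanSpace ℝ (Fin 2) |
          z 0 ∈ Icc (0:ℝ) w ∧ z 1 ∈ Icc (0:ℝ) (w * (s / c))} := by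
        refine ⟨?_, ?_⟩ <;> simp [pt, mem_Icc] <;> positivity
      have hBmem : pt w 0 ∈ {z : EuclideanSpace ℝ (Fin 2) |
          z 0 ∈ Icc (0:ℝ) w ∧ z 1 ∈ Icc (0:ℝ) (w * (s / c))} := by
        refine ⟨?_, ?_⟩ <;> simp [pt, mem_Icc] <;> positivity
      obtain ⟨p, hpU, hpd⟩ := Metric.mem_thickening_iff.mp (hsub hAmem)
      obtain ⟨q, hqU, hqd⟩ := Metric.mem_thickening_iff.mp (hsub hBmem)
      exact max_lt (lt_of_le_of_lt (farA w x₀ s c hw hx00 hx0w hs hc h1 p hpU) hpd)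
        (lt_of_le_of_lt (farB w x₀ s c hw hx00 hx0w hs hc h1 q hqU) hqd)
    · intro hr
      have hM0 : (0:ℝ) < max (x₀ * s) ((w - x₀) * s) :=
        lt_of_lt_of_le (by positivity) (le_max_left _ _)
      refine ⟨hM0.trans hr, ?_⟩
      rintro z ⟨hz0, hz1⟩
      rw [mem_Icc] at hz0 hz1
      have hyc : z 1 * c ≤ w * s := by
        have h2 := mul_le_mul_of_nonneg_right hz1.2 hc.le
        have h3 : w * (s / c) * c = w * s := by field_simp
        linarith
      obtain ⟨p, hpU, hpd⟩ := cover w x₀ s c (z 0) (z 1) hw hx00 hx0w hs hc h1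
        hz0.1 hz0.2 hz1.1 hyc
      rw [Metric.mem_thickening_iff]
      refine ⟨p, hpU, ?_⟩
      calc dist z p = dist (pt (z 0) (z 1)) p := by rw [← pt_eta]
        _ ≤ max (x₀ * s) ((w - x₀) * s) := hpd
        _ < r := hr
  rw [key, csInf_Ioi]
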